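/- (Stochastic greedy guarantee) If F is non-negative, monotone and submodular, and stochastic greedy maximization in each of k iterations samples r = (n/k)·log(1/ε) elements uniformly at random from X \ A^S and adds the one with largest marginal gain, then E[F(A^S)] ≥ (1 - 1/e - ε)·F(A*), where A* maximizes F over sets of size k. -/

import Mathlib

open Finset

lemma exp_cvx (a x : ℝ) (h0 : 0 ≤ a) (h1 : a ≤ 1) : Real.exp (a*x) ≤ a * Real.exp x + (1-a) := by
  have h := convexOn_exp
  rw [ConvexOn] at h
  have := h.2 (Set.mem_univ x) (Set.mem_univ (0:ℝ)) h0 (show (0:ℝ) ≤ 1 - a by linarith) (by ring)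
  simp only [smul_eq_mul, mul_zero, add_zero, Real.exp_zero, mul_one] at this
  linarith

lemma sum_marg {α : Type*} [DecidableEq α] (F : Finset α → ℝ)
    (hsub : ∀ (A B : Finset α) (i : α), A ⊆ B → i ∉ B →
      F (insert i B) - F B ≤ F (insert i A) - F A)
    (S B : Finset α) :
    F (S ∪ B) - F B ≤ ∑ i ∈ S \ B, (F (insert i B) - F B) := by
  induction S using Finset.induction_on with
  | empty => simp
  | @insert a S ha ih =>
    by_cases hb : a ∈ B
    · have h1 : insert a S ∪ B = S ∪ B := by
        rw [insert_union, insert_eq_self.2 (mem_union_right _ hb)]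
      have h2 : insert a S \ B = S \ B := by
        rw [insert_sdiff_of_mem _ hb]
      rw [h1, h2]; exact ih
    · have h2 : insert a S \ B = insert a (S \ B) := insert_sdiff_of_notMem _ hb
      rw [h2, insert_union]
      rw [Finset.sum_insert (by simp [ha])]
      have hna : a ∉ S ∪ B := by simp [ha, hb]
      have := hsub B (S ∪ B) a subset_union_right hna
      linarith

lemma choose_ratio (N r : ℕ) (hr1 : 1 ≤ r) (hrN : r ≤ N) :
    ∀ t : ℕ, ((N - t).choose r : ℝ) * (N:ℝ)^t ≤ (N.choose r : ℝ) * ((N:ℝ) - r)^t := by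
  intro t
  induction t with
  | zero => simp
  | succ t ih =>
    have hNr : (0:ℝ) ≤ (N:ℝ) - r := by
      have : (r:ℝ) ≤ N := Nat.cast_le.2 hrN; linarith
    have hN0 : (0:ℝ) ≤ (N:ℝ) := Nat.cast_nonneg N
    by_cases ht : N ≤ t
    · have : N - (t+1) = 0 := by omega
      rw [this]
      have : (0:ℕ).choose r = 0 := Nat.choose_eq_zero_of_lt (by omega)
      rw [this]
      simp only [Nat.cast_zero, zero_mul]
      positivity
    · push_neg at ht
      set A := N - t with hA
      have hA1 : 1 ≤ A := by omega
      have hid : ((A-1).choose r : ℝ) * (A:ℝ) = (A.choose r : ℝ) * ((A:ℝ) - r) := by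
        by_cases hrA : r ≤ A
        · have := Nat.choose_mul_succ_eq (A-1) r
          have h2 : A - 1 + 1 = A := by omega
          rw [h2] at this
          have : ((A-1).choose r : ℝ) * (A:ℝ) = ((A.choose r : ℝ)) * ((A - r : ℕ) : ℝ) := by
            exact_mod_cast congrArg (Nat.cast : ℕ → ℝ) this
          rw [this, Nat.cast_sub hrA]
        · push_neg at hrA
          rw [Nat.choose_eq_zero_of_lt (by omega), Nat.choose_eq_zero_of_lt hrA]
          simp
      have hstep : ((A-1).choose r : ℝ) * (N:ℝ) ≤ (A.choose r : ℝ) * ((N:ℝ) - r) := by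
        have hAle : (A:ℝ) ≤ N := Nat.cast_le.2 (by omega)
        have hApos : (0:ℝ) < A := by exact_mod_cast hA1
        have hrr : (0:ℝ) ≤ r := Nat.cast_nonneg r
        have hc : (0:ℝ) ≤ (A.choose r : ℝ) := Nat.cast_nonneg _
        have h1 : ((A:ℝ)-r)*N ≤ ((N:ℝ)-r)*A := by nlinarith
        have h2 : (((A-1).choose r : ℝ) * (N:ℝ)) * (A:ℝ) ≤ ((A.choose r : ℝ) * ((N:ℝ) - r)) * (A:ℝ) := by
          calc (((A-1).choose r : ℝ) * (N:ℝ)) * (A:ℝ) = (((A-1).choose r : ℝ) * (A:ℝ)) * N := by ring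
            _ = ((A.choose r : ℝ) * ((A:ℝ) - r)) * N := by rw [hid]
            _ = (A.choose r : ℝ) * (((A:ℝ)-r)*N) := by ring
            _ ≤ (A.choose r : ℝ) * (((N:ℝ)-r)*A) := by exact mul_le_mul_of_nonneg_left h1 hc
            _ = ((A.choose r : ℝ) * ((N:ℝ) - r)) * (A:ℝ) := by ring
        exact le_of_mul_le_mul_right h2 hApos
      have hsub1 : N - (t+1) = A - 1 := by omega
      rw [hsub1]
      calc ((A-1).choose r : ℝ) * (N:ℝ)^(t+1)
          = (((A-1).choose r : ℝ) * (N:ℝ)) * (N:ℝ)^t := by ring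
        _ ≤ ((A.choose r : ℝ) * ((N:ℝ) - r)) * (N:ℝ)^t := by
            apply mul_le_mul_of_nonneg_right hstep (by positivity)
        _ = ((A.choose r : ℝ) * (N:ℝ)^t) * ((N:ℝ) - r) := by ring
        _ ≤ ((N.choose r : ℝ) * ((N:ℝ)-r)^t) * ((N:ℝ)-r) := by
            apply mul_le_mul_of_nonneg_right _ hNr
            rw [hA]; exact ih
        _ = (N.choose r : ℝ) * ((N:ℝ)-r)^(t+1) := by ring

lemma hit_bound (n k r N t : ℕ) (ε : ℝ) (hk : 0 < k) (hr1 : 1 ≤ r)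
    (hε0 : 0 < ε) (hr : ((n : ℝ) / k) * Real.log (1 / ε) ≤ (r : ℝ))
    (hNn : N ≤ n) (hrN : r ≤ N) (ht1 : 1 ≤ t) (htk : t ≤ k) :
    (t:ℝ) * ((1-ε)/k) * (N.choose r : ℝ) ≤ (N.choose r : ℝ) - ((N-t).choose r : ℝ) := by
  have hN0 : 0 < N := le_trans hr1 hrN
  have hn0 : 0 < n := lt_of_lt_of_le hN0 hNn
  have hNR : (0:ℝ) < N := by exact_mod_cast hN0
  have hnR : (0:ℝ) < n := by exact_mod_cast hn0
  have hkR : (0:ℝ) < k := by exact_mod_cast hk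
  have htR : (0:ℝ) < t := by exact_mod_cast ht1
  have hrR : (0:ℝ) < r := by exact_mod_cast hr1
  have hC0 : (0:ℝ) < (N.choose r : ℝ) := by exact_mod_cast Nat.choose_pos hrN
  have hNrle : (r:ℝ) ≤ N := by exact_mod_cast hrN
  have hbase0 : (0:ℝ) ≤ ((N:ℝ) - r)/N := by
    apply div_nonneg (by linarith) (le_of_lt hNR)
  have h1 : ((N-t).choose r : ℝ) ≤ (N.choose r : ℝ) * (((N:ℝ) - r)/N)^t := by
    have := choose_ratio N r hr1 hrN t
    rw [div_pow, ← mul_div_assoc, le_div_iff₀ (by positivity)]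
    linarith
  have h2 : ((N:ℝ) - r)/N ≤ Real.exp (-((r:ℝ)/n)) := by
    have ha : ((N:ℝ) - r)/N = 1 - (r:ℝ)/N := by field_simp
    have hb : (r:ℝ)/n ≤ (r:ℝ)/N := by
      apply div_le_div_of_nonneg_left (le_of_lt hrR) hNR
      exact_mod_cast hNn
    have hc : 1 - (r:ℝ)/n ≤ Real.exp (-((r:ℝ)/n)) := by
      have := Real.add_one_le_exp (-((r:ℝ)/n)); linarith
    rw [ha]; linarith
  have h3 : ((N-t).choose r : ℝ) ≤ (N.choose r : ℝ) * Real.exp (-((r:ℝ)*t/n)) := by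
    have hpow : (((N:ℝ) - r)/N)^t ≤ (Real.exp (-((r:ℝ)/n)))^t :=
      pow_le_pow_left₀ hbase0 h2 t
    have hexp : (Real.exp (-((r:ℝ)/n)))^t = Real.exp (-((r:ℝ)*t/n)) := by
      rw [← Real.exp_nat_mul]; ring_nf
    calc ((N-t).choose r : ℝ) ≤ (N.choose r : ℝ) * (((N:ℝ) - r)/N)^t := h1
      _ ≤ (N.choose r : ℝ) * (Real.exp (-((r:ℝ)/n)))^t := by
          exact mul_le_mul_of_nonneg_left hpow (le_of_lt hC0)
      _ = (N.choose r : ℝ) * Real.exp (-((r:ℝ)*t/n)) := by rw [hexp]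
  have h4 : Real.exp (-((r:ℝ)*t/n)) ≤ Real.exp (((t:ℝ)/k) * Real.log ε) := by
    apply Real.exp_le_exp.2
    have hlog : Real.log (1/ε) = - Real.log ε := by
      rw [one_div, Real.log_inv]
    rw [hlog] at hr
    have hmul := mul_le_mul_of_nonneg_left hr (le_of_lt (div_pos htR hnR))
    have he1 : ((t:ℝ)/n) * (((n:ℝ)/k) * (- Real.log ε)) = ((t:ℝ)/k) * (- Real.log ε) := by
      field_simp
    rw [he1] at hmul
    have he2 : ((t:ℝ)/n) * r = (r:ℝ)*t/n := by ring
    rw [he2] at hmul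
    linarith
  have h5 : Real.exp (((t:ℝ)/k) * Real.log ε) ≤ ((t:ℝ)/k) * ε + (1 - (t:ℝ)/k) := by
    have := exp_cvx ((t:ℝ)/k) (Real.log ε) (by positivity)
      (by rw [div_le_one hkR]; exact_mod_cast htk)
    rwa [Real.exp_log hε0] at this
  have hM : ((N-t).choose r : ℝ) ≤ (N.choose r : ℝ) * (((t:ℝ)/k) * ε + (1 - (t:ℝ)/k)) := by
    calc ((N-t).choose r : ℝ) ≤ (N.choose r : ℝ) * Real.exp (-((r:ℝ)*t/n)) := h3
      _ ≤ (N.choose r : ℝ) * (((t:ℝ)/k) * ε + (1 - (t:ℝ)/k)) := by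
          apply mul_le_mul_of_nonneg_left _ (le_of_lt hC0)
          exact le_trans h4 h5
  have hfin : (t:ℝ) * ((1-ε)/k) * (N.choose r : ℝ)
      = (N.choose r : ℝ) - (N.choose r : ℝ) * (((t:ℝ)/k) * ε + (1 - (t:ℝ)/k)) := by
    field_simp; ring
  rw [hfin]; linarith

lemma w_sym {α : Type*} [DecidableEq α] (U D : Finset α) (hD : D ⊆ U) (r : ℕ)
    (i j : α) (hi : i ∈ D) (hj : j ∈ D) :
    ∑ s ∈ U.powersetCard r, (if i ∈ s then (((s ∩ D).card : ℝ))⁻¹ else 0)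
      = ∑ s ∈ U.powersetCard r, (if j ∈ s then (((s ∩ D).card : ℝ))⁻¹ else 0) := by
  set σ := Equiv.swap i j with hσ
  have hDσ : ∀ x, σ x ∈ D ↔ x ∈ D := by
    intro x
    rcases eq_or_ne x i with rfl | hxi
    · simp [hσ, Equiv.swap_apply_left, hi, hj]
    rcases eq_or_ne x j with rfl | hxj
    · simp [hσ, Equiv.swap_apply_right, hi, hj]
    · rw [hσ, Equiv.swap_apply_of_ne_of_ne hxi hxj]
  have hUσ : ∀ x ∈ U, σ x ∈ U := by
    intro x hx
    rcases eq_or_ne x i with rfl | hxi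
    · simpa [hσ, Equiv.swap_apply_left] using hD hj
    rcases eq_or_ne x j with rfl | hxj
    · simpa [hσ, Equiv.swap_apply_right] using hD hi
    · rwa [hσ, Equiv.swap_apply_of_ne_of_ne hxi hxj]
  have hmem : ∀ s ∈ U.powersetCard r, s.image σ ∈ U.powersetCard r := by
    intro s hs
    rw [mem_powersetCard] at hs ⊢
    refine ⟨?_, ?_⟩
    · intro x hx
      rw [mem_image] at hx
      obtain ⟨y, hy, rfl⟩ := hx
      exact hUσ y (hs.1 hy)
    · rw [card_image_of_injective _ σ.injective, hs.2]
  have hinv : ∀ s : Finset α, (s.image σ).image σ = s := by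
    intro s
    rw [image_image]
    have : (σ : α → α) ∘ σ = id := by
      funext x; simp [hσ, Equiv.swap_apply_self]
    rw [this, image_id]
  have hinter : ∀ s : Finset α, (s.image σ) ∩ D = (s ∩ D).image σ := by
    intro s
    ext x
    simp only [mem_inter, mem_image]
    constructor
    · rintro ⟨⟨y, hy, rfl⟩, hxD⟩
      exact ⟨y, ⟨hy, (hDσ y).1 hxD⟩, rfl⟩
    · rintro ⟨y, ⟨hy, hyD⟩, rfl⟩
      exact ⟨⟨y, hy, rfl⟩, (hDσ y).2 hyD⟩
  have hcard : ∀ s : Finset α, ((s.image σ) ∩ D).card = (s ∩ D).card := by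
    intro s; rw [hinter, card_image_of_injective _ σ.injective]
  have hmemij : ∀ s : Finset α, j ∈ s.image σ ↔ i ∈ s := by
    intro s
    rw [mem_image]
    constructor
    · rintro ⟨y, hy, hyj⟩
      have : y = i := by
        have := σ.injective (a₁ := y) (a₂ := i)
        apply this
        rw [hyj, hσ, Equiv.swap_apply_left]
      rwa [this] at hy
    · intro h
      exact ⟨i, h, by rw [hσ, Equiv.swap_apply_left]⟩
  refine Finset.sum_nbij' (fun s => s.image σ) (fun s => s.image σ) hmem hmem
    (fun s _ => hinv s) (fun s _ => hinv s) ?_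
  intro s hs
  simp only [hcard s, hmemij s]

lemma avg_lemma {α : Type*} [DecidableEq α] (U D : Finset α) (hD : D ⊆ U)
    (hDne : D.Nonempty) (r : ℕ) (Δ : α → ℝ) :
    ∑ s ∈ U.powersetCard r, (∑ x ∈ s ∩ D, Δ x) / ((s ∩ D).card : ℝ)
      = ((((U.powersetCard r).filter (fun s => (s ∩ D).Nonempty)).card : ℝ) / (D.card : ℝ))
          * ∑ x ∈ D, Δ x := by
  classical
  set 𝒮 := U.powersetCard r with h𝒮
  set H := (𝒮.filter (fun s => (s ∩ D).Nonempty)).card with hH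
  set w : α → ℝ := fun i => ∑ s ∈ 𝒮, if i ∈ s then (((s ∩ D).card : ℝ))⁻¹ else 0 with hw
  obtain ⟨i0, hi0⟩ := hDne
  have hww : ∀ i ∈ D, w i = w i0 := fun i hi => w_sym U D hD r i i0 hi hi0
  have hper : ∀ s : Finset α, (∑ i ∈ D, if i ∈ s then (((s ∩ D).card : ℝ))⁻¹ else 0)
      = if (s ∩ D).Nonempty then (1:ℝ) else 0 := by
    intro s
    rw [Finset.sum_ite_mem, Finset.sum_const, Finset.inter_comm D s, nsmul_eq_mul]
    by_cases hne : (s ∩ D).Nonempty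
    · have hc : ((s ∩ D).card : ℝ) ≠ 0 := by
        have := Finset.card_pos.2 hne
        positivity
      simp [hne, mul_inv_cancel₀ hc]
    · have : s ∩ D = ∅ := Finset.not_nonempty_iff_eq_empty.1 hne
      simp [hne, this]
  have hsumw : ∑ i ∈ D, w i = (H : ℝ) := by
    rw [hw, hH]
    rw [Finset.sum_comm]
    simp only [hper]
    rw [Finset.sum_boole]
  have hwi0 : w i0 = (H : ℝ) / (D.card : ℝ) := by
    have h1 : ∑ i ∈ D, w i = (D.card : ℝ) * w i0 := by
      rw [Finset.sum_congr rfl hww, Finset.sum_const, nsmul_eq_mul]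
    have hDc : ((D.card : ℝ)) ≠ 0 := by
      have := Finset.card_pos.2 ⟨i0, hi0⟩
      positivity
    rw [eq_div_iff hDc]
    linear_combination hsumw - h1
  calc ∑ s ∈ 𝒮, (∑ x ∈ s ∩ D, Δ x) / ((s ∩ D).card : ℝ)
      = ∑ s ∈ 𝒮, ∑ x ∈ D, (if x ∈ s then Δ x * (((s ∩ D).card : ℝ))⁻¹ else 0) := by
        apply Finset.sum_congr rfl
        intro s _
        rw [div_eq_mul_inv, Finset.sum_mul, Finset.inter_comm s D, ← Finset.sum_ite_mem]
    _ = ∑ x ∈ D, Δ x * w x := by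
        rw [Finset.sum_comm]
        apply Finset.sum_congr rfl
        intro x _
        rw [hw, Finset.mul_sum]
        apply Finset.sum_congr rfl
        intro s _
        split_ifs <;> simp
    _ = ((H : ℝ) / (D.card : ℝ)) * ∑ x ∈ D, Δ x := by
        rw [Finset.mul_sum]
        apply Finset.sum_congr rfl
        intro x hx
        rw [hww x hx, hwi0]; ring

/-- Stochastic greedy guarantee: if in each of `k` iterations a uniformly random subset
`R` of size `r ≥ (n/k)·log(1/ε)` of `X \ A^S` is sampled and the element of `R` with the
largest marginal gain is added, then `E[F(A^S)] ≥ (1 - 1/e - ε)·F(A*)` for non-negative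
monotone submodular `F`.  Randomness is modelled by a finite probability space `(Ω, q)`;
`AS m` is the (random) partial solution after `m` iterations and `R m` the sampled set. -/
theorem stochastic_greedy_guarantee {α : Type*} [Fintype α] [DecidableEq α]
    (F : Finset α → ℝ)
    (hnn : ∀ A : Finset α, 0 ≤ F A)
    (hmono : ∀ A B : Finset α, A ⊆ B → F A ≤ F B)
    (hsub : ∀ (A B : Finset α) (i : α), A ⊆ B → i ∉ B →
      F (insert i B) - F B ≤ F (insert i A) - F A)
    (n k r : ℕ) (hn : Fintype.card α = n) (hk : 0 < k) (hrk : r + k ≤ n) (hr1 : 1 ≤ r)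
    (ε : ℝ) (hε0 : 0 < ε) (hε1 : ε < 1)
    (hr : ((n : ℝ) / k) * Real.log (1 / ε) ≤ (r : ℝ))
    (Ω : Type*) [Fintype Ω] (q : Ω → ℝ)
    (hq0 : ∀ ω, 0 ≤ q ω) (hq1 : ∑ ω, q ω = 1)
    (AS R : ℕ → Ω → Finset α)
    (h0 : ∀ ω, AS 0 ω = ∅)
    (hR : ∀ m < k, ∀ ω, R m ω ⊆ Finset.univ \ AS m ω ∧ (R m ω).card = r)
    -- conditional on `AS m = B`, the sample `R m` is uniform over the size-`r`
    -- subsets of `X \ B`: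
    (hunif : ∀ m < k, ∀ B s : Finset α, s ⊆ Finset.univ \ B → s.card = r →
      (∑ ω, if AS m ω = B ∧ R m ω = s then q ω else 0) * ((n - B.card).choose r : ℝ)
        = ∑ ω, if AS m ω = B then q ω else 0)
    (hstep : ∀ m < k, ∀ ω, ∃ i ∈ R m ω, AS (m + 1) ω = insert i (AS m ω) ∧
      ∀ j ∈ R m ω, F (insert j (AS m ω)) - F (AS m ω) ≤ F (insert i (AS m ω)) - F (AS m ω))
    (Astar : Finset α) (hcard : Astar.card = k)
    (hopt : ∀ B : Finset α, B.card ≤ k → F B ≤ F Astar) :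
    (1 - Real.exp (-1) - ε) * F Astar ≤ ∑ ω, q ω * F (AS k ω) := by
  classical
  have hcardAS : ∀ m, m ≤ k → ∀ ω, (AS m ω).card = m := by
    intro m
    induction m with
    | zero => intro _ ω; rw [h0 ω]; rfl
    | succ m ih =>
      intro hm ω
      have hmk : m < k := by omega
      obtain ⟨i, hiR, hAS, _⟩ := hstep m hmk ω
      have hiU := (hR m hmk ω).1 hiR
      rw [Finset.mem_sdiff] at hiU
      rw [hAS, Finset.card_insert_of_notMem hiU.2, ih (by omega) ω]
  have hFA0 : 0 ≤ F Astar := hnn Astar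
  set g : ℕ → ℝ := fun m => ∑ ω, q ω * F (AS m ω) with hg
  have hkR : (0:ℝ) < k := by exact_mod_cast hk
  have hc0 : 0 ≤ (1-ε)/k := div_nonneg (by linarith) (le_of_lt hkR)
  have hc1 : (1-ε)/k ≤ 1 := by
    rw [div_le_one hkR]
    have : (1:ℝ) ≤ k := by exact_mod_cast hk
    linarith
  have key : ∀ m, m < k → F Astar - g (m+1) ≤ (1 - (1-ε)/k) * (F Astar - g m) := by
    intro m hm
    have claim : ∀ B : Finset α,
        ((1-ε)/k) * (F Astar - F B) * (∑ ω, if AS m ω = B then q ω else 0)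
          ≤ ∑ ω, if AS m ω = B then q ω * (F (AS (m+1) ω) - F B) else 0 := by
      intro B
      by_cases hatt : ∃ ω0, AS m ω0 = B
      swap
      · push_neg at hatt
        have e1 : (∑ ω, if AS m ω = B then q ω else 0) = 0 :=
          Finset.sum_eq_zero (fun ω _ => if_neg (hatt ω))
        have e2 : (∑ ω, if AS m ω = B then q ω * (F (AS (m+1) ω) - F B) else 0) = 0 :=
          Finset.sum_eq_zero (fun ω _ => if_neg (hatt ω))
        rw [e1, e2, mul_zero]
      obtain ⟨ω0, hω0⟩ := hatt
      have hBcard : B.card = m := by rw [← hω0]; exact hcardAS m (le_of_lt hm) ω0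
      set U : Finset α := Finset.univ \ B with hU
      set D : Finset α := Astar \ B with hD
      set Δ : α → ℝ := fun i => F (insert i B) - F B with hΔ
      set P : ℝ := ∑ ω, if AS m ω = B then q ω else 0 with hP
      have hP0 : 0 ≤ P := by
        rw [hP]
        apply Finset.sum_nonneg
        intro ω _
        split_ifs
        · exact hq0 ω
        · exact le_refl 0
      have hΔ0 : ∀ i, 0 ≤ Δ i := by
        intro i
        have := hmono B (insert i B) (Finset.subset_insert i B)
        simp only [hΔ]; linarith
      have hgain : ∀ ω, AS m ω = B →
          (0 ≤ F (AS (m+1) ω) - F B ∧ ∀ j ∈ R m ω, Δ j ≤ F (AS (m+1) ω) - F B) := by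
        intro ω hASB
        obtain ⟨i, hiR, hAS1, hmax⟩ := hstep m hm ω
        rw [hASB] at hAS1 hmax
        constructor
        · rw [hAS1]
          have := hmono B (insert i B) (Finset.subset_insert i B); linarith
        · intro j hj
          have := hmax j hj
          rw [hAS1]
          simpa [hΔ] using this
      by_cases hDne : D.Nonempty
      swap
      · have hAB : Astar ⊆ B := by
          rw [← Finset.sdiff_eq_empty_iff_subset]
          exact Finset.not_nonempty_iff_eq_empty.1 hDne
        have hFle : F Astar ≤ F B := hmono _ _ hAB
        have hrhs : 0 ≤ ∑ ω, if AS m ω = B then q ω * (F (AS (m+1) ω) - F B) else 0 := by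
          apply Finset.sum_nonneg
          intro ω _
          split_ifs with h
          · exact mul_nonneg (hq0 ω) (hgain ω h).1
          · exact le_refl 0
        have hlhs : ((1-ε)/k) * (F Astar - F B) * P ≤ 0 := by
          apply mul_nonpos_of_nonpos_of_nonneg _ hP0
          apply mul_nonpos_of_nonneg_of_nonpos hc0
          linarith
        linarith
      -- main case
      set N : ℕ := n - m with hN
      have hUcard : U.card = N := by rw [hU, Finset.card_univ_diff, hn, hBcard]
      have hrN : r ≤ N := by omega
      set t : ℕ := D.card with ht
      have ht1 : 1 ≤ t := Finset.card_pos.2 hDne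
      have htR : (0:ℝ) < t := by exact_mod_cast ht1
      have htk : t ≤ k := by
        rw [ht, ← hcard]
        exact Finset.card_le_card (Finset.sdiff_subset)
      have hNn : N ≤ n := Nat.sub_le n m
      have hDU : D ⊆ U := by
        intro x hx
        rw [hD, Finset.mem_sdiff] at hx
        rw [hU, Finset.mem_sdiff]
        exact ⟨Finset.mem_univ x, hx.2⟩
      set C : ℕ := N.choose r with hCdef
      have hC0 : (0:ℝ) < (C:ℝ) := by exact_mod_cast Nat.choose_pos hrN
      have hPr : ∀ s ∈ U.powersetCard r,
          (∑ ω, if AS m ω = B ∧ R m ω = s then q ω else 0) = P / (C:ℝ) := by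
        intro s hs
        rw [Finset.mem_powersetCard] at hs
        have h1 := hunif m hm B s hs.1 hs.2
        rw [hBcard] at h1
        rw [eq_div_iff (ne_of_gt hC0)]
        exact h1
      have hRmem : ∀ ω, AS m ω = B → R m ω ∈ U.powersetCard r := by
        intro ω hASB
        rw [Finset.mem_powersetCard]
        have h1 := (hR m hm ω).1
        rw [hASB] at h1
        exact ⟨h1, (hR m hm ω).2⟩
      set hfun : Finset α → ℝ := fun s => (∑ x ∈ s ∩ D, Δ x) / ((s ∩ D).card : ℝ) with hhfun
      have stepA : ∑ ω, (if AS m ω = B then q ω * hfun (R m ω) else 0)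
          ≤ ∑ ω, (if AS m ω = B then q ω * (F (AS (m+1) ω) - F B) else 0) := by
        apply Finset.sum_le_sum
        intro ω _
        split_ifs with h
        · apply mul_le_mul_of_nonneg_left _ (hq0 ω)
          by_cases hne : ((R m ω) ∩ D).Nonempty
          · rw [hhfun]
            dsimp only
            rw [div_le_iff₀ (by exact_mod_cast Finset.card_pos.2 hne)]
            calc ∑ x ∈ R m ω ∩ D, Δ x
                ≤ ∑ _x ∈ R m ω ∩ D, (F (AS (m+1) ω) - F B) := by
                  apply Finset.sum_le_sum
                  intro x hx
                  exact (hgain ω h).2 x (Finset.mem_inter.1 hx).1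
              _ = (F (AS (m+1) ω) - F B) * ((R m ω ∩ D).card : ℝ) := by
                  rw [Finset.sum_const, nsmul_eq_mul]; ring
          · rw [hhfun]
            dsimp only
            rw [Finset.not_nonempty_iff_eq_empty.1 hne]
            simpa using (hgain ω h).1
        · exact le_refl 0
      have stepB : ∑ ω, (if AS m ω = B then q ω * hfun (R m ω) else 0)
          = ∑ s ∈ U.powersetCard r,
              (∑ ω, if AS m ω = B ∧ R m ω = s then q ω else 0) * hfun s := by
        have eachω : ∀ ω, (if AS m ω = B then q ω * hfun (R m ω) else 0)
            = ∑ s ∈ U.powersetCard r,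
                (if AS m ω = B ∧ R m ω = s then q ω * hfun s else 0) := by
          intro ω
          by_cases h : AS m ω = B
          · rw [if_pos h]
            simp only [h, true_and]
            rw [Finset.sum_ite_eq (U.powersetCard r) (R m ω) (fun s => q ω * hfun s)]
            rw [if_pos (hRmem ω h)]
          · simp [h]
        rw [Finset.sum_congr rfl (fun ω _ => eachω ω), Finset.sum_comm]
        apply Finset.sum_congr rfl
        intro s _
        rw [Finset.sum_mul]
        apply Finset.sum_congr rfl
        intro ω _
        rw [ite_mul, zero_mul]
      set H : ℕ := ((U.powersetCard r).filter (fun s => (s ∩ D).Nonempty)).card with hHdef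
      have hmiss : ((U.powersetCard r).filter (fun s => ¬(s ∩ D).Nonempty)).card
          = (N - t).choose r := by
        have hset : (U.powersetCard r).filter (fun s => ¬(s ∩ D).Nonempty)
            = (U \ D).powersetCard r := by
          ext s
          simp only [Finset.mem_filter, Finset.mem_powersetCard,
            Finset.not_nonempty_iff_eq_empty]
          constructor
          · rintro ⟨⟨hsU, hsr⟩, hsD⟩
            refine ⟨?_, hsr⟩
            intro x hx
            rw [Finset.mem_sdiff]
            refine ⟨hsU hx, ?_⟩
            intro hxD
            have hmemx : x ∈ s ∩ D := Finset.mem_inter.2 ⟨hx, hxD⟩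
            rw [hsD] at hmemx
            exact absurd hmemx (Finset.notMem_empty x)
          · rintro ⟨hsUD, hsr⟩
            refine ⟨⟨fun x hx => (Finset.mem_sdiff.1 (hsUD hx)).1, hsr⟩, ?_⟩
            rw [Finset.eq_empty_iff_forall_notMem]
            intro x hx
            rw [Finset.mem_inter] at hx
            exact (Finset.mem_sdiff.1 (hsUD hx.1)).2 hx.2
        rw [hset, Finset.card_powersetCard, Finset.card_sdiff_of_subset hDU, hUcard, ht]
      have hHC : H + (N - t).choose r = C := by
        rw [← hmiss, hHdef, Finset.card_filter_add_card_filter_not,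
          Finset.card_powersetCard, hUcard]
      have hHge : (t:ℝ) * ((1-ε)/k) * (C:ℝ) ≤ (H:ℝ) := by
        have hb := hit_bound n k r N t ε hk hr1 hε0 hr hNn hrN ht1 htk
        have hcast : (H:ℝ) = (C:ℝ) - ((N-t).choose r : ℝ) := by
          have := hHC
          have h2 : (H:ℝ) + ((N-t).choose r : ℝ) = (C:ℝ) := by exact_mod_cast this
          linarith
        rw [hcast]
        exact hb
      have hsumΔ0 : 0 ≤ ∑ x ∈ D, Δ x := Finset.sum_nonneg (fun x _ => hΔ0 x)
      have hsumΔFA : F Astar - F B ≤ ∑ x ∈ D, Δ x := by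
        have h1 := sum_marg F hsub Astar B
        have h2 := hmono Astar (Astar ∪ B) Finset.subset_union_left
        rw [hD, hΔ]
        linarith
      have havg := avg_lemma U D hDU hDne r Δ
      have stepC : ((1-ε)/k) * (F Astar - F B) * P
          ≤ ∑ s ∈ U.powersetCard r,
              (∑ ω, if AS m ω = B ∧ R m ω = s then q ω else 0) * hfun s := by
        have e1 : ∑ s ∈ U.powersetCard r,
              (∑ ω, if AS m ω = B ∧ R m ω = s then q ω else 0) * hfun s
            = (P / (C:ℝ)) * ∑ s ∈ U.powersetCard r, hfun s := by
          rw [Finset.mul_sum]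
          exact Finset.sum_congr rfl (fun s hs => by rw [hPr s hs])
        have e2 : ∑ s ∈ U.powersetCard r, hfun s = ((H:ℝ)/(t:ℝ)) * ∑ x ∈ D, Δ x := by
          rw [hhfun]
          exact havg
        rw [e1, e2]
        have h7 : ((1-ε)/k) ≤ (H:ℝ)/((t:ℝ)*(C:ℝ)) := by
          rw [le_div_iff₀ (by positivity)]
          calc ((1-ε)/k) * ((t:ℝ)*(C:ℝ)) = (t:ℝ) * ((1-ε)/k) * (C:ℝ) := by ring
            _ ≤ (H:ℝ) := hHge
        calc ((1-ε)/k) * (F Astar - F B) * P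
            ≤ ((1-ε)/k) * ((∑ x ∈ D, Δ x) * P) := by
              have := mul_le_mul_of_nonneg_left hsumΔFA hc0
              have h8 := mul_le_mul_of_nonneg_right this hP0
              calc ((1-ε)/k) * (F Astar - F B) * P
                  ≤ ((1-ε)/k) * (∑ x ∈ D, Δ x) * P := h8
                _ = ((1-ε)/k) * ((∑ x ∈ D, Δ x) * P) := by ring
          _ ≤ ((H:ℝ)/((t:ℝ)*(C:ℝ))) * ((∑ x ∈ D, Δ x) * P) :=
              mul_le_mul_of_nonneg_right h7 (mul_nonneg hsumΔ0 hP0)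
          _ = (P / (C:ℝ)) * (((H:ℝ)/(t:ℝ)) * ∑ x ∈ D, Δ x) := by
              field_simp
      calc ((1-ε)/k) * (F Astar - F B) * P
          ≤ ∑ s ∈ U.powersetCard r,
              (∑ ω, if AS m ω = B ∧ R m ω = s then q ω else 0) * hfun s := stepC
        _ = ∑ ω, (if AS m ω = B then q ω * hfun (R m ω) else 0) := stepB.symm
        _ ≤ ∑ ω, (if AS m ω = B then q ω * (F (AS (m+1) ω) - F B) else 0) := stepA
    -- sum the claim over all B
    have tot := Finset.sum_le_sum (fun B (_ : B ∈ (Finset.univ : Finset (Finset α))) => claim B)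
    have hLtot : ∑ B : Finset α,
        ((1-ε)/k) * (F Astar - F B) * (∑ ω, if AS m ω = B then q ω else 0)
        = ((1-ε)/k) * (F Astar - g m) := by
      have e : ∀ B : Finset α, ((1-ε)/k) * (F Astar - F B) * (∑ ω, if AS m ω = B then q ω else 0)
          = ∑ ω, (if AS m ω = B then ((1-ε)/k) * (F Astar - F B) * q ω else 0) := by
        intro B
        rw [Finset.mul_sum]
        exact Finset.sum_congr rfl (fun ω _ => by rw [mul_ite, mul_zero])
      rw [Finset.sum_congr rfl (fun B _ => e B), Finset.sum_comm]
      have e2 : ∀ ω : Ω, (∑ B : Finset α,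
          if AS m ω = B then ((1-ε)/k) * (F Astar - F B) * q ω else 0)
          = ((1-ε)/k) * (F Astar - F (AS m ω)) * q ω := by
        intro ω
        rw [Finset.sum_ite_eq Finset.univ (AS m ω)
          (fun B => ((1-ε)/k) * (F Astar - F B) * q ω)]
        rw [if_pos (Finset.mem_univ _)]
      rw [Finset.sum_congr rfl (fun ω _ => e2 ω)]
      have e3 : ∀ ω : Ω, ((1-ε)/k) * (F Astar - F (AS m ω)) * q ω
          = ((1-ε)/k) * (F Astar * q ω) - ((1-ε)/k) * (q ω * F (AS m ω)) := by
        intro ω; ring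
      rw [Finset.sum_congr rfl (fun ω _ => e3 ω), Finset.sum_sub_distrib,
        ← Finset.mul_sum, ← Finset.mul_sum, ← Finset.mul_sum, hq1]
      rw [hg]
      ring
    have hRtot : ∑ B : Finset α,
        (∑ ω, if AS m ω = B then q ω * (F (AS (m+1) ω) - F B) else 0)
        = g (m+1) - g m := by
      rw [Finset.sum_comm]
      have e2 : ∀ ω : Ω, (∑ B : Finset α,
          if AS m ω = B then q ω * (F (AS (m+1) ω) - F B) else 0)
          = q ω * (F (AS (m+1) ω) - F (AS m ω)) := by
        intro ω
        rw [Finset.sum_ite_eq Finset.univ (AS m ω)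
          (fun B => q ω * (F (AS (m+1) ω) - F B))]
        rw [if_pos (Finset.mem_univ _)]
      rw [Finset.sum_congr rfl (fun ω _ => e2 ω)]
      have e3 : ∀ ω : Ω, q ω * (F (AS (m+1) ω) - F (AS m ω))
          = q ω * F (AS (m+1) ω) - q ω * F (AS m ω) := fun ω => by ring
      rw [Finset.sum_congr rfl (fun ω _ => e3 ω), Finset.sum_sub_distrib]
    rw [hLtot, hRtot] at tot
    nlinarith [tot]
  -- iterate the recursion
  have hg0 : g 0 = F ∅ := by
    rw [hg]
    simp only [h0]
    rw [← Finset.sum_mul, hq1, one_mul]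
  have hind : ∀ m, m ≤ k → F Astar - g m ≤ (1 - (1-ε)/k)^m * F Astar := by
    intro m
    induction m with
    | zero =>
      intro _
      rw [pow_zero, one_mul]
      rw [hg0]
      linarith [hnn ∅]
    | succ m ih =>
      intro hm
      have h1 := key m (by omega)
      have h2 := ih (by omega)
      have h1c : 0 ≤ 1 - (1-ε)/k := by linarith
      calc F Astar - g (m+1) ≤ (1 - (1-ε)/k) * (F Astar - g m) := h1
        _ ≤ (1 - (1-ε)/k) * ((1 - (1-ε)/k)^m * F Astar) :=
            mul_le_mul_of_nonneg_left h2 h1c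
        _ = (1 - (1-ε)/k)^(m+1) * F Astar := by ring
  have hindk := hind k le_rfl
  have hpow : (1 - (1-ε)/k)^k ≤ Real.exp (-1) + ε := by
    have h1 : 1 - (1-ε)/k ≤ Real.exp (-((1-ε)/k)) := by
      have := Real.add_one_le_exp (-((1-ε)/k)); linarith
    have h2 : (1 - (1-ε)/k)^k ≤ (Real.exp (-((1-ε)/k)))^k :=
      pow_le_pow_left₀ (by linarith) h1 k
    have h3 : (Real.exp (-((1-ε)/k)))^k = Real.exp (-(((1-ε)/k)*k)) := by
      rw [← Real.exp_nat_mul]; ring_nf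
    have h4 : ((1-ε)/k)*k = 1-ε := by field_simp
    have h6 : Real.exp ε ≤ ε * Real.exp 1 + (1-ε) := by
      simpa using exp_cvx ε 1 (le_of_lt hε0) (le_of_lt hε1)
    have h7 : Real.exp 1 * Real.exp (-1) = 1 := by
      rw [← Real.exp_add]; simp
    have h8 : Real.exp (-(1-ε)) = Real.exp ε * Real.exp (-1) := by
      rw [← Real.exp_add]; ring_nf
    calc (1 - (1-ε)/k)^k ≤ (Real.exp (-((1-ε)/k)))^k := h2
      _ = Real.exp (-(((1-ε)/k)*k)) := h3
      _ = Real.exp (-(1-ε)) := by rw [h4]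
      _ = Real.exp ε * Real.exp (-1) := h8
      _ ≤ (ε * Real.exp 1 + (1-ε)) * Real.exp (-1) :=
          mul_le_mul_of_nonneg_right h6 (le_of_lt (Real.exp_pos _))
      _ = ε * (Real.exp 1 * Real.exp (-1)) + (1-ε) * Real.exp (-1) := by ring
      _ = ε + (1-ε) * Real.exp (-1) := by rw [h7]; ring
      _ ≤ Real.exp (-1) + ε := by nlinarith [le_of_lt (Real.exp_pos (-1:ℝ))]
  have hfinal : F Astar - g k ≤ (Real.exp (-1) + ε) * F Astar := by
    calc F Astar - g k ≤ (1 - (1-ε)/k)^k * F Astar := hindk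
      _ ≤ (Real.exp (-1) + ε) * F Astar := mul_le_mul_of_nonneg_right hpow hFA0
  have : g k = ∑ ω, q ω * F (AS k ω) := by rw [hg]
  nlinarith [hfinal]
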